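/- If ∑_n δ_n diverges, where δ_n = min_k (min_i M_{n-1,n}(i,k))/(max_i M_{n-1,n}(i,k)) for a sequence of nonnegative matrices M_{n-1,n}, then δ_n > 0 for infinitely many n, and the infinite product ∏_{k>n}(1-δ_k) equals 0 for every n; consequently, for each n the nested convex sets Δ_{n,N} (convex hulls of the volume-normalized columns of M_{n,N} = M_{n,n+1}⋯M_{N-1,N}) shrink to a single point as N → ∞. -/

import Mathlib

open Finset Filter

noncomputable def direction {j : ℕ} (vol : Fin j → ℝ) (v : Fin j → ℝ) : Fin j → ℝ :=
  (∑ i, v i * vol i)⁻¹ • v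

section helpers

variable {j : ℕ}

/-- nonneg matrix with no zero column -/
def GoodM (A : Matrix (Fin j) (Fin j) ℝ) : Prop :=
  (∀ i k, 0 ≤ A i k) ∧ (∀ k, ∃ i, 0 < A i k)

lemma goodM_one (hj : 0 < j) : GoodM (1 : Matrix (Fin j) (Fin j) ℝ) := by
  constructor
  · intro i k
    rw [Matrix.one_apply]
    split <;> norm_num
  · intro k
    exact ⟨k, by rw [Matrix.one_apply_eq]; norm_num⟩

lemma goodM_mul {A B : Matrix (Fin j) (Fin j) ℝ} (hA : GoodM A) (hB : GoodM B) :
    GoodM (A * B) := by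
  constructor
  · intro i k
    rw [Matrix.mul_apply]
    exact Finset.sum_nonneg fun l _ => mul_nonneg (hA.1 i l) (hB.1 l k)
  · intro k
    obtain ⟨l, hl⟩ := hB.2 k
    obtain ⟨i, hi⟩ := hA.2 l
    refine ⟨i, ?_⟩
    rw [Matrix.mul_apply]
    have h1 : 0 < A i l * B l k := mul_pos hi hl
    have h2 : A i l * B l k ≤ ∑ m, A i m * B m k :=
      Finset.single_le_sum (f := fun m => A i m * B m k)
        (fun m _ => mul_nonneg (hA.1 i m) (hB.1 m k)) (Finset.mem_univ l)
    linarith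

lemma svol_pos {vol v : Fin j → ℝ} (hvol : ∀ i, 0 < vol i)
    (h0 : ∀ i, 0 ≤ v i) (hp : ∃ i, 0 < v i) : 0 < ∑ i, v i * vol i := by
  obtain ⟨i0, hi0⟩ := hp
  have h1 : 0 < v i0 * vol i0 := mul_pos hi0 (hvol i0)
  have h2 : v i0 * vol i0 ≤ ∑ i, v i * vol i :=
    Finset.single_le_sum (f := fun i => v i * vol i)
      (fun i _ => mul_nonneg (h0 i) (hvol i).le) (Finset.mem_univ i0)
  linarith

end helpers

lemma key_contraction {j : ℕ} (d : Fin j → (Fin j → ℝ)) (t t' u : Fin j → ℝ) (δ : ℝ)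
    (hδ1 : δ ≤ 1)
    (ht1 : ∑ l, t l = 1) (ht'1 : ∑ l, t' l = 1)
    (htu : ∀ l, δ * u l ≤ t l) (ht'u : ∀ l, δ * u l ≤ t' l)
    (hus : ∑ l, u l = 1) :
    ‖(∑ l, t l • d l) - ∑ l, t' l • d l‖ ≤ (1 - δ) * Metric.diam (Set.range d) := by
  classical
  set a : Fin j → ℝ := fun l => max (t l - t' l) 0 with ha
  set b : Fin j → ℝ := fun l => max (t' l - t l) 0 with hb
  have hab : ∀ l, t l - t' l = a l - b l := by
    intro l
    rcases le_total (t l) (t' l) with h | h <;>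
      simp [ha, hb, max_eq_left, max_eq_right, sub_nonneg.2 h, sub_nonpos.2 h] <;> ring_nf <;>
      rw [max_eq_left (by linarith), max_eq_right (by linarith)] <;> ring
  have ha0 : ∀ l, 0 ≤ a l := fun l => le_max_right _ _
  have hb0 : ∀ l, 0 ≤ b l := fun l => le_max_right _ _
  have hsum : ∑ l, a l = ∑ l, b l := by
    have : ∑ l, (a l - b l) = 0 := by
      calc ∑ l, (a l - b l) = ∑ l, (t l - t' l) :=
            Finset.sum_congr rfl (fun l _ => (hab l).symm)
        _ = 0 := by rw [Finset.sum_sub_distrib, ht1, ht'1]; ring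
    rw [Finset.sum_sub_distrib] at this; linarith
  set m := ∑ l, a l with hm
  have hm0 : 0 ≤ m := Finset.sum_nonneg fun l _ => ha0 l
  have hm1 : m ≤ 1 - δ := by
    have h1 : ∀ l, a l ≤ t l - δ * u l := by
      intro l
      exact max_le (by linarith [ht'u l]) (by linarith [htu l])
    calc m ≤ ∑ l, (t l - δ * u l) := Finset.sum_le_sum fun l _ => h1 l
    _ = 1 - δ := by rw [Finset.sum_sub_distrib, ht1, ← Finset.mul_sum, hus]; ring
  have hdiff : (∑ l, t l • d l) - ∑ l, t' l • d l = (∑ l, a l • d l) - ∑ l, b l • d l := by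
    rw [← Finset.sum_sub_distrib, ← Finset.sum_sub_distrib]
    congr 1; ext l
    rw [← sub_smul, ← sub_smul, hab l]
  have hdiam0 : 0 ≤ Metric.diam (Set.range d) := Metric.diam_nonneg
  rcases eq_or_lt_of_le hm0 with h0 | h0
  · have haz : ∀ l, a l = 0 := by
      intro l
      have := Finset.sum_eq_zero_iff_of_nonneg (fun l _ => ha0 l) |>.1 h0.symm
      exact this l (Finset.mem_univ l)
    have hbz : ∀ l, b l = 0 := by
      intro l
      have := Finset.sum_eq_zero_iff_of_nonneg (fun l _ => hb0 l) |>.1 (hsum ▸ h0.symm)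
      exact this l (Finset.mem_univ l)
    rw [hdiff]
    simp only [haz, hbz, zero_smul, Finset.sum_const_zero, sub_zero, norm_zero]
    exact mul_nonneg (by linarith) hdiam0
  · have hmne : m ≠ 0 := ne_of_gt h0
    set p := m⁻¹ • ∑ l, a l • d l with hp
    set q := m⁻¹ • ∑ l, b l • d l with hq
    have hpa : ∑ l, a l • d l = m • p := by rw [hp, smul_inv_smul₀ hmne]
    have hqa : ∑ l, b l • d l = m • q := by rw [hq, smul_inv_smul₀ hmne]
    have hpc : p ∈ convexHull ℝ (Set.range d) := by
      have := Finset.centerMass_mem_convexHull (Finset.univ : Finset (Fin j))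
        (w := a) (z := d) (fun l _ => ha0 l) h0
        (fun l _ => Set.mem_range_self l)
      rw [Finset.centerMass] at this
      exact this
    have hqc : q ∈ convexHull ℝ (Set.range d) := by
      have := Finset.centerMass_mem_convexHull (Finset.univ : Finset (Fin j))
        (w := b) (z := d) (fun l _ => hb0 l) (by rw [← hsum]; exact h0)
        (fun l _ => Set.mem_range_self l)
      rw [Finset.centerMass, ← hsum] at this
      exact this
    have hbd : Bornology.IsBounded (convexHull ℝ (Set.range d)) :=
      isBounded_convexHull.2 (Set.finite_range d).isBounded
    have hdist : dist p q ≤ Metric.diam (Set.range d) := by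
      calc dist p q ≤ Metric.diam (convexHull ℝ (Set.range d)) :=
        Metric.dist_le_diam_of_mem hbd hpc hqc
      _ = _ := convexHull_diam _
    rw [hdiff, hpa, hqa, ← smul_sub]
    rw [norm_smul, Real.norm_eq_abs, abs_of_nonneg hm0]
    calc m * ‖p - q‖ = m * dist p q := by rw [dist_eq_norm]
    _ ≤ (1 - δ) * Metric.diam (Set.range d) := by
        apply mul_le_mul hm1 hdist (dist_nonneg) (by linarith)

lemma step_lemma {j : ℕ} (hj : 0 < j) (vol : Fin j → ℝ) (hvol : ∀ i, 0 < vol i)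
    (c : Fin j → (Fin j → ℝ)) (hc0 : ∀ l i, 0 ≤ c l i)
    (hs : ∀ l, 0 < ∑ i, c l i * vol i)
    (b : Fin j → Fin j → ℝ) (hb0 : ∀ l k, 0 ≤ b l k)
    (hbcol : ∀ k, ∃ l, 0 < b l k)
    (δ : ℝ) (hδ0 : 0 ≤ δ) (hδ1 : δ ≤ 1)
    (hbal : ∀ k l l', δ * b l k ≤ b l' k) :
    (∀ k, direction vol (fun i => ∑ l, c l i * b l k) ∈
        convexHull ℝ (Set.range fun l => direction vol (c l))) ∧
    (∀ k k', dist (direction vol (fun i => ∑ l, c l i * b l k))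
        (direction vol (fun i => ∑ l, c l i * b l k'))
      ≤ (1 - δ) * Metric.diam (Set.range fun l => direction vol (c l))) := by
  classical
  haveI : Nonempty (Fin j) := ⟨⟨0, hj⟩⟩
  set s : Fin j → ℝ := fun l => ∑ i, c l i * vol i with hsdef
  set T : Fin j → ℝ := fun k => ∑ l, b l k * s l with hT
  have hT0 : ∀ k, 0 < T k := by
    intro k
    obtain ⟨l0, hl0⟩ := hbcol k
    have h1 : 0 < b l0 k * s l0 := mul_pos hl0 (hs l0)
    have h2 : b l0 k * s l0 ≤ T k :=
      Finset.single_le_sum (f := fun l => b l k * s l)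
        (fun l _ => mul_nonneg (hb0 l k) (hs l).le) (Finset.mem_univ l0)
    linarith
  set S : ℝ := ∑ l, s l with hS
  have hS0 : 0 < S := Finset.sum_pos (fun l _ => hs l) Finset.univ_nonempty
  set u : Fin j → ℝ := fun l => s l / S with hu
  have hus : ∑ l, u l = 1 := by
    rw [hu, ← Finset.sum_div, ← hS, div_self (ne_of_gt hS0)]
  set t : Fin j → Fin j → ℝ := fun k l => b l k * s l / T k with ht
  have hsvol : ∀ k, (∑ i, (∑ l, c l i * b l k) * vol i) = T k := by
    intro k
    calc ∑ i, (∑ l, c l i * b l k) * vol i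
        = ∑ i, ∑ l, c l i * b l k * vol i := by
          apply Finset.sum_congr rfl; intro i _; rw [Finset.sum_mul]
      _ = ∑ l, ∑ i, c l i * b l k * vol i := Finset.sum_comm
      _ = T k := by
          apply Finset.sum_congr rfl; intro l _
          rw [hsdef]; simp only []
          rw [Finset.mul_sum]
          apply Finset.sum_congr rfl; intro i _; ring
  have hdec : ∀ k, direction vol (fun i => ∑ l, c l i * b l k)
      = ∑ l, t k l • direction vol (c l) := by
    intro k
    funext i
    have hTne := (hT0 k).ne'
    simp only [direction, Finset.sum_apply, Pi.smul_apply, smul_eq_mul, hsvol k]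
    rw [Finset.mul_sum]
    apply Finset.sum_congr rfl
    intro l _
    have hsl2 : (∑ i, c l i * vol i) = s l := rfl
    rw [hsl2]
    have hslne : s l ≠ 0 := (hs l).ne'
    have hTne2 : T k ≠ 0 := (hT0 k).ne'
    field_simp
    rw [ht]
    field_simp
  have ht1 : ∀ k, ∑ l, t k l = 1 := by
    intro k
    rw [ht]; simp only []
    rw [← Finset.sum_div]
    exact div_self (hT0 k).ne'
  have ht0 : ∀ k l, 0 ≤ t k l :=
    fun k l => div_nonneg (mul_nonneg (hb0 l k) (hs l).le) (hT0 k).le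
  have htu : ∀ k l, δ * u l ≤ t k l := by
    intro k l
    rw [ht, hu]; simp only []
    have key : δ * T k ≤ b l k * S := by
      rw [hT, hS]; simp only []
      rw [Finset.mul_sum, Finset.mul_sum]
      apply Finset.sum_le_sum
      intro m _
      rw [← mul_assoc]
      exact mul_le_mul_of_nonneg_right (hbal k m l) (hs m).le
    have h2 := mul_le_mul_of_nonneg_left key (hs l).le
    rw [mul_div_assoc', div_le_div_iff₀ hS0 (hT0 k)]
    nlinarith [h2]
  constructor
  · intro k
    rw [hdec k]
    have := Finset.centerMass_mem_convexHull (Finset.univ : Finset (Fin j))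
      (w := t k) (z := fun l => direction vol (c l)) (fun l _ => ht0 k l)
      (by rw [ht1 k]; norm_num) (fun l _ => Set.mem_range_self l)
    rwa [Finset.centerMass, ht1 k, inv_one, one_smul] at this
  · intro k k'
    rw [dist_eq_norm, hdec k, hdec k']
    exact key_contraction _ (t k) (t k') u δ hδ1 (ht1 k) (ht1 k') (htu k) (htu k') hus

theorem stmt_2 (j : ℕ) (hj : 0 < j)
    (vol : Fin j → ℝ) (hvol : ∀ i, 0 < vol i)
    (M : ℕ → Matrix (Fin j) (Fin j) ℝ)
    (hMnn : ∀ n i k, 0 ≤ M n i k)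
    (hMcol : ∀ n k, ∃ i, 0 < M n i k)
    (δ : ℕ → ℝ) (hδ0 : ∀ n, 0 ≤ δ n) (hδ1 : ∀ n, δ n ≤ 1)
    (hbal : ∀ n k i i', δ n * M n i k ≤ M n i' k)
    (hdiv : ¬ Summable δ)
    (P : ℕ → ℕ → Matrix (Fin j) (Fin j) ℝ)
    (hP : ∀ n N, P n N = ((List.Ico n N).map M).prod) :
    {n | 0 < δ n}.Infinite ∧
    (∀ n, Tendsto (fun N => ∏ k ∈ Finset.Ico n N, (1 - δ k)) atTop (nhds 0)) ∧
    (∀ n, ∃ p : Fin j → ℝ,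
      (⋂ N ∈ {N : ℕ | n < N},
        convexHull ℝ (Set.range fun k : Fin j => direction vol (fun i => P n N i k))) = {p}) := by
  classical
  -- Part 1
  have part1 : {n | 0 < δ n}.Infinite := by
    by_contra h
    rw [Set.not_infinite] at h
    apply hdiv
    apply summable_of_ne_finset_zero (s := h.toFinset)
    intro b hb
    rw [Set.Finite.mem_toFinset, Set.mem_setOf_eq] at hb
    exact le_antisymm (not_lt.1 hb) (hδ0 b)
  -- Part 2
  have hSum : Tendsto (fun N => ∑ k ∈ Finset.range N, δ k) atTop atTop :=
    (not_summable_iff_tendsto_nat_atTop_of_nonneg hδ0).1 hdiv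
  have part2 : ∀ n, Tendsto (fun N => ∏ k ∈ Finset.Ico n N, (1 - δ k)) atTop (nhds 0) := by
    intro n
    have hg : Tendsto (fun N => Real.exp ((∑ k ∈ Finset.range n, δ k) - ∑ k ∈ Finset.range N, δ k))
        atTop (nhds 0) := by
      apply Real.tendsto_exp_atBot.comp
      apply tendsto_atBot_add_const_left
      exact tendsto_neg_atTop_atBot.comp hSum
    apply squeeze_zero' (g := fun N => Real.exp ((∑ k ∈ Finset.range n, δ k) - ∑ k ∈ Finset.range N, δ k))
    · filter_upwards with N
      exact Finset.prod_nonneg fun k _ => by linarith [hδ1 k]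
    · filter_upwards [eventually_ge_atTop n] with N hN
      have h1 : ∏ k ∈ Finset.Ico n N, (1 - δ k) ≤ ∏ k ∈ Finset.Ico n N, Real.exp (-δ k) := by
        apply Finset.prod_le_prod
        · intro k _; linarith [hδ1 k]
        · intro k _
          have := Real.add_one_le_exp (-δ k)
          linarith
      have h2 : ∏ k ∈ Finset.Ico n N, Real.exp (-δ k)
          = Real.exp ((∑ k ∈ Finset.range n, δ k) - ∑ k ∈ Finset.range N, δ k) := by
        rw [← Real.exp_sum]
        congr 1
        rw [Finset.sum_neg_distrib]
        rw [Finset.sum_Ico_eq_sub _ hN]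
        ring
      linarith [h1, h2.le, h2.ge]
    · exact hg
  refine ⟨part1, part2, ?_⟩
  -- Part 3
  intro n
  set cf : ℕ → Fin j → (Fin j → ℝ) := fun N k => fun i => P n N i k with hcf
  set d : ℕ → Fin j → (Fin j → ℝ) := fun N k => direction vol (cf N k) with hd
  set C : ℕ → Set (Fin j → ℝ) := fun N => convexHull ℝ (Set.range (d N)) with hC
  set D : ℕ → ℝ := fun N => Metric.diam (Set.range (d N)) with hD
  haveI : Nonempty (Fin j) := ⟨⟨0, hj⟩⟩
  -- recursion for P
  have hPsucc : ∀ N, n ≤ N → P n (N + 1) = P n N * M N := by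
    intro N hN
    rw [hP, hP, List.Ico.succ_top hN, List.map_append, List.prod_append]
    simp
  have hGood : ∀ N, n ≤ N → GoodM (P n N) := by
    intro N hN
    induction N with
    | zero =>
      have : n = 0 := Nat.le_zero.1 hN
      subst this
      rw [hP]; simp [List.Ico.eq_nil_of_le]
      exact goodM_one hj
    | succ N ih =>
      rcases Nat.lt_or_ge n (N + 1) with h | h
      · have hN' : n ≤ N := Nat.lt_succ_iff.1 h
        rw [hPsucc N hN']
        exact goodM_mul (ih hN') ⟨hMnn N, hMcol N⟩
      · have : n = N + 1 := le_antisymm hN h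
        subst this
        rw [hP]; simp [List.Ico.eq_nil_of_le]
        exact goodM_one hj
  have hsvol : ∀ N, n ≤ N → ∀ l, 0 < ∑ i, cf N l i * vol i := by
    intro N hN l
    exact svol_pos hvol (fun i => (hGood N hN).1 i l)
      (by obtain ⟨i, hi⟩ := (hGood N hN).2 l; exact ⟨i, hi⟩)
  -- step facts
  have hstep : ∀ N, n ≤ N →
      (∀ k, d (N + 1) k ∈ C N) ∧ (∀ k k', dist (d (N + 1) k) (d (N + 1) k') ≤ (1 - δ N) * D N) := by
    intro N hN
    have hcol : ∀ k, cf (N + 1) k = fun i => ∑ l, cf N l i * M N l k := by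
      intro k
      funext i
      rw [hcf]; simp only []
      rw [hPsucc N hN, Matrix.mul_apply]
    have := step_lemma hj vol hvol (cf N) (fun l i => (hGood N hN).1 i l) (hsvol N hN)
      (fun l k => M N l k) (fun l k => hMnn N l k) (fun k => hMcol N k)
      (δ N) (hδ0 N) (hδ1 N) (fun k l l' => hbal N k l l')
    constructor
    · intro k
      have h1 := this.1 k
      rw [← hcol k] at h1
      exact h1
    · intro k k'
      have h1 := this.2 k k'
      rw [← hcol k, ← hcol k'] at h1
      exact h1
  have hCsub : ∀ N, n ≤ N → C (N + 1) ⊆ C N := by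
    intro N hN
    apply convexHull_min _ (convex_convexHull ℝ _)
    rintro x ⟨k, rfl⟩
    exact (hstep N hN).1 k
  have hDstep : ∀ N, n ≤ N → D (N + 1) ≤ (1 - δ N) * D N := by
    intro N hN
    apply Metric.diam_le_of_forall_dist_le
    · exact mul_nonneg (by linarith [hδ1 N]) Metric.diam_nonneg
    · rintro x ⟨k, rfl⟩ y ⟨k', rfl⟩
      exact (hstep N hN).2 k k'
  -- D bound
  have hDbound : ∀ N, n + 1 ≤ N → D N ≤ (∏ k ∈ Finset.Ico (n + 1) N, (1 - δ k)) * D (n + 1) := by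
    intro N hN
    induction N with
    | zero => omega
    | succ N ih =>
      rcases Nat.lt_or_ge (n + 1) (N + 1) with h | h
      · have hN' : n + 1 ≤ N := Nat.lt_succ_iff.1 h
        have h1 := hDstep N (by omega)
        have h2 := ih hN'
        have h3 : (0:ℝ) ≤ 1 - δ N := by linarith [hδ1 N]
        calc D (N + 1) ≤ (1 - δ N) * D N := h1
          _ ≤ (1 - δ N) * ((∏ k ∈ Finset.Ico (n + 1) N, (1 - δ k)) * D (n + 1)) :=
              mul_le_mul_of_nonneg_left h2 h3
          _ = (∏ k ∈ Finset.Ico (n + 1) (N + 1), (1 - δ k)) * D (n + 1) := by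
              rw [Finset.prod_Ico_succ_top hN']
              ring
      · have : n + 1 = N + 1 := le_antisymm hN h
        rw [← this]
        simp
  have hD0 : ∀ N, 0 ≤ D N := fun N => Metric.diam_nonneg
  have hDtend : Tendsto D atTop (nhds 0) := by
    apply squeeze_zero' (g := fun N => (∏ k ∈ Finset.Ico (n + 1) N, (1 - δ k)) * D (n + 1))
    · filter_upwards with N; exact hD0 N
    · filter_upwards [eventually_ge_atTop (n + 1)] with N hN
      exact hDbound N hN
    · have := (part2 (n + 1)).mul_const (D (n + 1))
      simpa using this
  -- antitone
  have hCanti : ∀ N₁ N₂, n ≤ N₁ → N₁ ≤ N₂ → C N₂ ⊆ C N₁ := by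
    intro N₁ N₂ h1 h2
    induction N₂ with
    | zero =>
      have : N₁ = 0 := Nat.le_zero.1 h2
      rw [this]
    | succ N₂ ih =>
      rcases Nat.lt_or_ge N₁ (N₂ + 1) with h | h
      · have h3 : N₁ ≤ N₂ := Nat.lt_succ_iff.1 h
        exact (hCsub N₂ (le_trans h1 h3)).trans (ih h3)
      · have : N₁ = N₂ + 1 := le_antisymm h2 h
        rw [this]
  -- nonempty intersection
  have hCcompact : ∀ N, IsCompact (C N) :=
    fun N => (Set.finite_range (d N)).isCompact_convexHull (𝕜 := ℝ)
  have hCne : ∀ N, (C N).Nonempty :=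
    fun N => ⟨d N ⟨0, hj⟩, subset_convexHull ℝ _ (Set.mem_range_self _)⟩
  set K : ℕ → Set (Fin j → ℝ) := fun m => C (n + 1 + m) with hK
  have hKsub : ∀ m, K (m + 1) ⊆ K m := by
    intro m
    have : n + 1 + (m + 1) = (n + 1 + m) + 1 := by ring
    rw [hK]; simp only [this]
    exact hCsub (n + 1 + m) (by omega)
  obtain ⟨p, hp⟩ := IsCompact.nonempty_iInter_of_sequence_nonempty_isCompact_isClosed K
    hKsub (fun m => hCne _) (hCcompact _) (fun m => (hCcompact _).isClosed)
  -- the intersection equals ⋂ m, K m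
  have hEq : (⋂ N ∈ {N : ℕ | n < N}, C N) = ⋂ m, K m := by
    ext x
    simp only [Set.mem_iInter, Set.mem_setOf_eq]
    constructor
    · intro h m
      exact h (n + 1 + m) (by omega)
    · intro h N hN
      have h2 : n + 1 + (N - n - 1) = N := by omega
      have h3 : x ∈ C (n + 1 + (N - n - 1)) := h (N - n - 1)
      rwa [h2] at h3
  refine ⟨p, ?_⟩
  have hpmem : ∀ N, n < N → p ∈ C N := by
    intro N hN
    have h2 : n + 1 + (N - n - 1) = N := by omega
    have h1 : p ∈ C (n + 1 + (N - n - 1)) := Set.mem_iInter.1 hp (N - n - 1)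
    rwa [h2] at h1
  rw [hEq] at *
  apply Set.eq_singleton_iff_unique_mem.2
  constructor
  · exact hp
  · intro q hq
    have hqmem : ∀ N, n < N → q ∈ C N := by
      intro N hN
      have h2 : n + 1 + (N - n - 1) = N := by omega
      have h1 : q ∈ C (n + 1 + (N - n - 1)) := Set.mem_iInter.1 hq (N - n - 1)
      rwa [h2] at h1
    have hdist : ∀ N, n < N → dist q p ≤ D N := by
      intro N hN
      have hbd : Bornology.IsBounded (C N) :=
        isBounded_convexHull.2 (Set.finite_range (d N)).isBounded
      calc dist q p ≤ Metric.diam (C N) :=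
            Metric.dist_le_diam_of_mem hbd (hqmem N hN) (hpmem N hN)
        _ = D N := convexHull_diam _
    have : dist q p ≤ 0 := by
      apply ge_of_tendsto hDtend
      filter_upwards [eventually_gt_atTop n] with N hN
      exact hdist N hN
    have : dist q p = 0 := le_antisymm this dist_nonneg
    exact dist_eq_zero.1 this
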